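/- arXiv:0806.0569 — 3 statements merged into one kernel-verified Lean document; each statement's English description precedes it below -/
import Mathlib

section
/- For i = 1, 2, let (J_i, K_i, η_i, ε_i) be an adjoint couple of bifunctors from C_i' to C_i with parameter in X. Let H : C₁ ⥤ C₂ and H' : C₁' ⥤ C₂' be functors, and let a be a morphism of bifunctors with components a_{X,M} : J₂(X, H'(M)) ⟶ H(J₁(X, M)), natural in both the parameter X and in M. Then there exists a unique morphism of bifunctors b, with components b_{X,N} : H'(K₁(X, N)) ⟶ K₂(X, H(N)) natural in X and N, such that for every object X the equality (ε₂_X ∗ H) ∘ (J₂(X, b_{X,−})) = (H ∗ ε₁_X) ∘ (a_{X, K₁(X,−)}) holds as natural transformations J₂(X, H'(K₁(X, −))) ⟶ H(−); moreover, for this b, the dual equality (b_{X, J₁(X,−)}) ∘ (H' ∗ η₁_X) = (K₂(X, a_{X,−})) ∘ (η₂_X ∗ H') of natural transformations H' ⟶ K₂(X, H(J₁(X, −))) also holds for every X. -/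
open CategoryTheory Opposite

/-- An *adjoint couple of bifunctors* (ACB) from `C'` to `C` with parameter in `X`:
bifunctors `L : X × C' ⥤ C` and `R : Xᵒᵖ × C ⥤ C'` (given in curried form), together with
adjunctions `L(x,−) ⊣ R(x,−)` for every parameter `x`, whose units and counits are
generalized transformations in the parameter. -/
structure ACB (X : Type*) [Category X] (C' : Type*) [Category C'] (C : Type*) [Category C] where
  /-- the left adjoint bifunctor -/
  L : X ⥤ C' ⥤ C
  /-- the right adjoint bifunctor -/
  R : Xᵒᵖ ⥤ C ⥤ C'
  /-- the adjunction `L(x,−) ⊣ R(x,−)` for every parameter `x` -/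
  adj : ∀ x : X, L.obj x ⊣ R.obj (op x)
  /-- the counits form a generalized transformation -/
  counit_gen : ∀ {A B : X} (f : A ⟶ B) (c : C),
    (L.obj A).map ((R.map f.op).app c) ≫ (adj A).counit.app c =
      (L.map f).app ((R.obj (op B)).obj c) ≫ (adj B).counit.app c
  /-- the units form a generalized transformation -/
  unit_gen : ∀ {A B : X} (f : A ⟶ B) (c' : C'),
    (adj B).unit.app c' ≫ (R.map f.op).app ((L.obj B).obj c') =
      (adj A).unit.app c' ≫ (R.obj (op A)).map ((L.map f).app c')

/-- **The mates lemma for adjoint couples of bifunctors.**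
Given ACBs `(J₁, K₁)` and `(J₂, K₂)` with parameter in `X`, functors `H : C₁ ⥤ C₂` and
`H' : C₁' ⥤ C₂'`, and a morphism of bifunctors `a` with components
`a x M : J₂(x, H'(M)) ⟶ H(J₁(x, M))` natural in the parameter `x` and in `M`, there is a
unique morphism of bifunctors `b`, with components `b x N : H'(K₁(x,N)) ⟶ K₂(x,H(N))`
natural in `x` and `N`, making the counit compatibility diagram commute for every parameter
`x`; moreover this `b` also makes the dual unit compatibility diagram commute. -/
theorem stmt3 {X C₁ C₁' C₂ C₂' : Type*}
    [Category X] [Category C₁] [Category C₁'] [Category C₂] [Category C₂']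
    (acb₁ : ACB X C₁' C₁) (acb₂ : ACB X C₂' C₂)
    (H : C₁ ⥤ C₂) (H' : C₁' ⥤ C₂')
    (a : ∀ (x : X) (M : C₁'), (acb₂.L.obj x).obj (H'.obj M) ⟶ H.obj ((acb₁.L.obj x).obj M))
    (ha_nat : ∀ (x : X) {M M' : C₁'} (g : M ⟶ M'),
      (acb₂.L.obj x).map (H'.map g) ≫ a x M' = a x M ≫ H.map ((acb₁.L.obj x).map g))
    (ha_par : ∀ {x x' : X} (f : x ⟶ x') (M : C₁'),
      (acb₂.L.map f).app (H'.obj M) ≫ a x' M = a x M ≫ H.map ((acb₁.L.map f).app M)) :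
    ∃ b : ∀ (x : X) (N : C₁),
        H'.obj ((acb₁.R.obj (op x)).obj N) ⟶ (acb₂.R.obj (op x)).obj (H.obj N),
      ((∀ (x : X) {N N' : C₁} (g : N ⟶ N'),
          H'.map ((acb₁.R.obj (op x)).map g) ≫ b x N' =
            b x N ≫ (acb₂.R.obj (op x)).map (H.map g)) ∧
        (∀ {x x' : X} (f : x ⟶ x') (N : C₁),
          H'.map ((acb₁.R.map f.op).app N) ≫ b x N =
            b x' N ≫ (acb₂.R.map f.op).app (H.obj N)) ∧
        -- the counit compatibility diagram
        (∀ (x : X) (N : C₁),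
          (acb₂.L.obj x).map (b x N) ≫ (acb₂.adj x).counit.app (H.obj N) =
            a x ((acb₁.R.obj (op x)).obj N) ≫ H.map ((acb₁.adj x).counit.app N)) ∧
        -- moreover, the dual unit compatibility diagram also holds for this `b`
        (∀ (x : X) (M : C₁'),
          H'.map ((acb₁.adj x).unit.app M) ≫ b x ((acb₁.L.obj x).obj M) =
            (acb₂.adj x).unit.app (H'.obj M) ≫ (acb₂.R.obj (op x)).map (a x M))) ∧
      -- uniqueness among binatural families satisfying the counit compatibility diagram
      (∀ b' : ∀ (x : X) (N : C₁),
          H'.obj ((acb₁.R.obj (op x)).obj N) ⟶ (acb₂.R.obj (op x)).obj (H.obj N),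
        (∀ (x : X) {N N' : C₁} (g : N ⟶ N'),
          H'.map ((acb₁.R.obj (op x)).map g) ≫ b' x N' =
            b' x N ≫ (acb₂.R.obj (op x)).map (H.map g)) →
        (∀ {x x' : X} (f : x ⟶ x') (N : C₁),
          H'.map ((acb₁.R.map f.op).app N) ≫ b' x N =
            b' x' N ≫ (acb₂.R.map f.op).app (H.obj N)) →
        (∀ (x : X) (N : C₁),
          (acb₂.L.obj x).map (b' x N) ≫ (acb₂.adj x).counit.app (H.obj N) =
            a x ((acb₁.R.obj (op x)).obj N) ≫ H.map ((acb₁.adj x).counit.app N)) →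
        b' = b) := by
  set b : ∀ (x : X) (N : C₁),
      H'.obj ((acb₁.R.obj (op x)).obj N) ⟶ (acb₂.R.obj (op x)).obj (H.obj N) :=
    fun x N => (acb₂.adj x).unit.app (H'.obj ((acb₁.R.obj (op x)).obj N)) ≫
      (acb₂.R.obj (op x)).map
        (a x ((acb₁.R.obj (op x)).obj N) ≫ H.map ((acb₁.adj x).counit.app N)) with hb
  have counit_compat : ∀ (x : X) (N : C₁),
      (acb₂.L.obj x).map (b x N) ≫ (acb₂.adj x).counit.app (H.obj N) =
        a x ((acb₁.R.obj (op x)).obj N) ≫ H.map ((acb₁.adj x).counit.app N) := by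
    intro x N
    simp [hb]
  have uniq : ∀ b' : ∀ (x : X) (N : C₁),
      H'.obj ((acb₁.R.obj (op x)).obj N) ⟶ (acb₂.R.obj (op x)).obj (H.obj N),
      (∀ (x : X) (N : C₁),
        (acb₂.L.obj x).map (b' x N) ≫ (acb₂.adj x).counit.app (H.obj N) =
          a x ((acb₁.R.obj (op x)).obj N) ≫ H.map ((acb₁.adj x).counit.app N)) →
      b' = b := by
    intro b' hb'
    funext x N
    have h1 : b' x N = (acb₂.adj x).unit.app (H'.obj ((acb₁.R.obj (op x)).obj N)) ≫
        (acb₂.R.obj (op x)).map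
          ((acb₂.L.obj x).map (b' x N) ≫ (acb₂.adj x).counit.app (H.obj N)) := by
      simp
    rw [h1, hb' x N, hb]
  refine ⟨b, ⟨?_, ?_, counit_compat, ?_⟩, fun b' _ _ h => uniq b' h⟩
  · -- naturality in N
    intro x N N' g
    simp only [hb]
    rw [← Category.assoc, ← (acb₂.adj x).unit_naturality, Category.assoc,
      ← Functor.map_comp, Category.assoc, ← Functor.map_comp]
    congr 1
    rw [reassoc_of% (ha_nat x ((acb₁.R.obj (op x)).map g)), ← H.map_comp,
      (acb₁.adj x).counit_naturality, H.map_comp, ← Category.assoc]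
  · -- naturality in the parameter
    intro x x' f N
    have inner : (acb₂.L.obj x).map (H'.map ((acb₁.R.map f.op).app N)) ≫
        a x ((acb₁.R.obj (op x)).obj N) ≫ H.map ((acb₁.adj x).counit.app N) =
        (acb₂.L.map f).app (H'.obj ((acb₁.R.obj (op x')).obj N)) ≫
          a x' ((acb₁.R.obj (op x')).obj N) ≫ H.map ((acb₁.adj x').counit.app N) := by
      rw [reassoc_of% (ha_nat x ((acb₁.R.map f.op).app N)), ← H.map_comp,
        acb₁.counit_gen f N, H.map_comp, ← Category.assoc, ← ha_par f, Category.assoc]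
    have hL : H'.map ((acb₁.R.map f.op).app N) ≫ b x N =
        (acb₂.adj x).unit.app (H'.obj ((acb₁.R.obj (op x')).obj N)) ≫
          (acb₂.R.obj (op x)).map
            ((acb₂.L.map f).app (H'.obj ((acb₁.R.obj (op x')).obj N)) ≫
              a x' ((acb₁.R.obj (op x')).obj N) ≫ H.map ((acb₁.adj x').counit.app N)) := by
      simp only [hb]
      rw [← Category.assoc, ← (acb₂.adj x).unit_naturality, Category.assoc,
        ← Functor.map_comp, inner]
    have hR : b x' N ≫ (acb₂.R.map f.op).app (H.obj N) =
        (acb₂.adj x).unit.app (H'.obj ((acb₁.R.obj (op x')).obj N)) ≫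
          (acb₂.R.obj (op x)).map
            ((acb₂.L.map f).app (H'.obj ((acb₁.R.obj (op x')).obj N)) ≫
              a x' ((acb₁.R.obj (op x')).obj N) ≫ H.map ((acb₁.adj x').counit.app N)) := by
      simp only [hb]
      rw [Category.assoc, (acb₂.R.map f.op).naturality, ← Category.assoc,
        acb₂.unit_gen f (H'.obj ((acb₁.R.obj (op x')).obj N)), Category.assoc,
        ← Functor.map_comp]
    rw [hL, hR]
  · -- unit compatibility
    intro x M
    simp only [hb]
    have h3 : H'.map ((acb₁.adj x).unit.app M) ≫
        (acb₂.adj x).unit.app (H'.obj ((acb₁.R.obj (op x)).obj ((acb₁.L.obj x).obj M))) =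
        (acb₂.adj x).unit.app (H'.obj M) ≫
          (acb₂.R.obj (op x)).map ((acb₂.L.obj x).map (H'.map ((acb₁.adj x).unit.app M))) :=
      ((acb₂.adj x).unit_naturality _).symm
    rw [← Category.assoc, h3, Category.assoc, ← Functor.map_comp]
    congr 1
    rw [reassoc_of% (ha_nat x ((acb₁.adj x).unit.app M)), ← H.map_comp,
      (acb₁.adj x).left_triangle_components, H.map_id, Category.comp_id]
end

section
/- Let C and D be categories equipped with shift functors T_C and T_D (self-equivalences given by a shift by ℤ), let (L, R, η, ε) be an adjunction with L : C ⥤ D, and let l : L ∘ T_C ≅ T_D ∘ L be a natural isomorphism. Then: (1) there exists a unique natural isomorphism r : R ∘ T_D ≅ T_C ∘ R such that the unit η : 1_C ⟶ R ∘ L and the counit ε : L ∘ R ⟶ 1_D commute with the suspensions, i.e. η and ε are morphisms of suspended functors when R ∘ L and L ∘ R carry the commutation isomorphisms composed from l and r; (2) if moreover C and D are pretriangulated categories and (L, l) is δ-exact for a sign δ ∈ {1, −1} — meaning that for every distinguished triangle (A, B, C, u, v, w) of C the triangle (LA, LB, LC, Lu, Lv, δ • (l_A ∘ L(w))) is distinguished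 in D — then (R, r) is δ-exact with the same sign δ. -/
open CategoryTheory CategoryTheory.Limits Pretriangulated
open CategoryTheory.Category

/-- **Suspension of adjunctions (Proposition `suspAdjExists`).**
Let `C`, `D` be categories with shift (by `ℤ`), `L ⊣ R` an adjunction and
`l : L ∘ T_C ≅ T_D ∘ L` a natural isomorphism. Then:
(1) there is a unique natural isomorphism `r : R ∘ T_D ≅ T_C ∘ R` making the unit and counit
of the adjunction into morphisms of suspended functors (for the commutation isomorphisms
composed from `l` and `r`);
(2) if moreover `C` and `D` are pretriangulated and `(L, l)` is `δ`-exact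
(`δ = 1` or `δ = -1`), then `(R, r)` is `δ`-exact with the same `δ`. -/
theorem stmt4 {C D : Type*} [Category C] [Category D]
    [HasShift C ℤ] [HasShift D ℤ]
    (L : C ⥤ D) (R : D ⥤ C) (adj : L ⊣ R)
    (l : shiftFunctor C (1 : ℤ) ⋙ L ≅ L ⋙ shiftFunctor D (1 : ℤ)) :
    -- (1) unique `r` compatible with unit and counit
    (∃! r : shiftFunctor D (1 : ℤ) ⋙ R ≅ R ⋙ shiftFunctor C (1 : ℤ),
      (∀ A : C,
        adj.unit.app ((shiftFunctor C (1 : ℤ)).obj A) ≫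
            R.map (l.hom.app A) ≫ r.hom.app (L.obj A) =
          (shiftFunctor C (1 : ℤ)).map (adj.unit.app A)) ∧
      (∀ B : D,
        L.map (r.hom.app B) ≫ l.hom.app (R.obj B) ≫
            (shiftFunctor D (1 : ℤ)).map (adj.counit.app B) =
          adj.counit.app ((shiftFunctor D (1 : ℤ)).obj B))) ∧
    -- (2) in the pretriangulated case, `δ`-exactness of `(L, l)` implies that of `(R, r)`
    (∀ [HasZeroObject C] [Preadditive C] [∀ n : ℤ, (shiftFunctor C n).Additive]
        [Pretriangulated C]
        [HasZeroObject D] [Preadditive D] [∀ n : ℤ, (shiftFunctor D n).Additive]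
        [Pretriangulated D]
        (δ : ℤ), (δ = 1 ∨ δ = -1) →
      (∀ T : Triangle C, (T ∈ distTriang C) →
        Triangle.mk (L.map T.mor₁) (L.map T.mor₂)
          (δ • (L.map T.mor₃ ≫ l.hom.app T.obj₁)) ∈ distTriang D) →
      ∀ r : shiftFunctor D (1 : ℤ) ⋙ R ≅ R ⋙ shiftFunctor C (1 : ℤ),
        ((∀ A : C,
            adj.unit.app ((shiftFunctor C (1 : ℤ)).obj A) ≫
                R.map (l.hom.app A) ≫ r.hom.app (L.obj A) =
              (shiftFunctor C (1 : ℤ)).map (adj.unit.app A)) ∧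
          (∀ B : D,
            L.map (r.hom.app B) ≫ l.hom.app (R.obj B) ≫
                (shiftFunctor D (1 : ℤ)).map (adj.counit.app B) =
              adj.counit.app ((shiftFunctor D (1 : ℤ)).obj B))) →
        ∀ T : Triangle D, (T ∈ distTriang D) →
          Triangle.mk (R.map T.mor₁) (R.map T.mor₂)
            (δ • (R.map T.mor₃ ≫ r.hom.app T.obj₁)) ∈ distTriang C) := by
  classical
  -- the mate of `l` with respect to the adjunction
  set m : R ⋙ shiftFunctor C (1 : ℤ) ⟶ shiftFunctor D (1 : ℤ) ⋙ R :=
    mateEquiv adj adj l.hom with hm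
  haveI hIso : IsIso m := by
    let adjC := (shiftEquiv C (1 : ℤ)).toAdjunction
    let adjD := (shiftEquiv D (1 : ℤ)).toAdjunction
    have h2 : m = (mateEquiv adjD adjC).symm
        (conjugateEquiv (adj.comp adjD) (adjC.comp adj) l.hom) := by
      rw [hm, ← iterated_mateEquiv_conjugateEquiv adj adj adjC adjD l.hom,
        Equiv.symm_apply_apply]
      rfl
    have hu : IsIso adjD.unit := by
      rw [Equivalence.toAdjunction_unit]; infer_instance
    have hc : IsIso adjC.counit := by
      rw [Equivalence.toAdjunction_counit]; infer_instance
    rw [h2]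
    show IsIso (Equiv.invFun (mateEquiv adjD adjC) _)
    dsimp only [mateEquiv, TwoSquare.mk, TwoSquare.natTrans]
    haveI : @IsIso (C ⥤ D) _ ((shiftEquiv C (1 : ℤ)).functor ⋙ L) (L ⋙ (shiftEquiv D (1 : ℤ)).functor)
        l.hom := Iso.isIso_hom l
    have : IsIso (conjugateEquiv (adj.comp adjD) (adjC.comp adj) l.hom) := conjugateEquiv_iso _ _ _
    infer_instance
  -- the natural isomorphism `r`
  let r : shiftFunctor D (1 : ℤ) ⋙ R ≅ R ⋙ shiftFunctor C (1 : ℤ) :=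
    ⟨inv m, m, IsIso.inv_hom_id _, IsIso.hom_inv_id _⟩
  -- the compatibility of `r` with the unit
  have hunit : ∀ A : C,
      adj.unit.app ((shiftFunctor C (1 : ℤ)).obj A) ≫
          R.map (l.hom.app A) ≫ r.hom.app (L.obj A) =
        (shiftFunctor C (1 : ℤ)).map (adj.unit.app A) := by
    intro A
    have hu := unit_mateEquiv adj adj l.hom A
    rw [← hm] at hu
    show adj.unit.app _ ≫ R.map (l.hom.app A) ≫ (inv m).app (L.obj A) = _
    rw [← cancel_mono (m.app (L.obj A))]
    simp only [assoc, NatIso.isIso_inv_app, IsIso.inv_hom_id, comp_id]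
    exact hu.symm
  -- any `r'` compatible with the counit is inverse to `m` componentwise
  have hcounit_unique : ∀ (r' : shiftFunctor D (1 : ℤ) ⋙ R ≅ R ⋙ shiftFunctor C (1 : ℤ)),
      (∀ B : D,
        L.map (r'.hom.app B) ≫ l.hom.app (R.obj B) ≫
            (shiftFunctor D (1 : ℤ)).map (adj.counit.app B) =
          adj.counit.app ((shiftFunctor D (1 : ℤ)).obj B)) →
      ∀ B : D, r'.hom.app B ≫ m.app B = 𝟙 _ := by
    intro r' h2 B
    apply (adj.homEquiv _ _).symm.injective
    rw [Adjunction.homEquiv_counit, Adjunction.homEquiv_counit, L.map_id, id_comp,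
      L.map_comp, assoc]
    have hc := mateEquiv_counit adj adj l.hom B
    rw [← hm] at hc
    rw [hc, h2 B]
  -- the compatibility of `r` with the counit
  have hcounit : ∀ B : D,
      L.map (r.hom.app B) ≫ l.hom.app (R.obj B) ≫
          (shiftFunctor D (1 : ℤ)).map (adj.counit.app B) =
        adj.counit.app ((shiftFunctor D (1 : ℤ)).obj B) := by
    intro B
    have hc := mateEquiv_counit adj adj l.hom B
    rw [← hm] at hc
    rw [← hc, ← L.map_comp_assoc]
    show L.map ((inv m).app B ≫ m.app B) ≫ _ = _
    rw [NatIso.isIso_inv_app, IsIso.inv_hom_id, L.map_id, id_comp]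
  constructor
  · -- part (1)
    refine ⟨r, ⟨hunit, hcounit⟩, ?_⟩
    intro r' ⟨h1', h2'⟩
    apply Iso.ext
    ext B
    have e1 := hcounit_unique r' h2' B
    have e2 := hcounit_unique r hcounit B
    rw [← cancel_mono (m.app B), e1, e2]
  · -- part (2)
    intro _ _ _ _ _ _ _ _ δ hδ hL r' hr' T hT
    obtain ⟨hr₁, hr₂⟩ := hr'
    obtain ⟨A, B, C₀, u, v, w⟩ := T
    dsimp only [Triangle.mk] at hL hT ⊢
    -- additivity of `L` and `R`
    have hLadj : L.IsLeftAdjoint := ⟨R, ⟨adj⟩⟩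
    have hRadj : R.IsRightAdjoint := ⟨L, ⟨adj⟩⟩
    letI : PreservesColimitsOfSize.{0, 0} L := adj.leftAdjoint_preservesColimits
    letI : PreservesLimitsOfSize.{0, 0} R := adj.rightAdjoint_preservesLimits
    letI : PreservesBinaryBiproducts L :=
      preservesBinaryBiproducts_of_preservesBinaryCoproducts L
    letI : PreservesBinaryBiproducts R :=
      preservesBinaryBiproducts_of_preservesBinaryProducts R
    letI : L.Additive := Functor.additive_of_preservesBinaryBiproducts L
    letI : R.Additive := Functor.additive_of_preservesBinaryBiproducts R
    -- basic facts about δ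
    have hδ2 : δ * δ = 1 := by rcases hδ with h | h <;> subst h <;> norm_num
    have hδδD : ∀ {Y Z : D} (g : Y ⟶ Z), δ • δ • g = g := by
      intro Y Z g; rw [smul_smul, hδ2, one_smul]
    have hδδC : ∀ {Y Z : C} (g : Y ⟶ Z), δ • δ • g = g := by
      intro Y Z g; rw [smul_smul, hδ2, one_smul]
    -- a distinguished triangle on `R.map u`
    obtain ⟨Z, v', w', hT'⟩ := Pretriangulated.distinguished_cocone_triangle (R.map u)
    -- its image under `L` is distinguished
    have hLT' := hL _ hT'
    dsimp only [Triangle.mk] at hLT'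
    -- complete `(ε_A, ε_B)` into a morphism of distinguished triangles
    obtain ⟨φ, hφ₁, hφ₂⟩ := Pretriangulated.complete_distinguished_triangle_morphism
      _ _ hLT' hT (adj.counit.app A) (adj.counit.app B)
      (show L.map (R.map u) ≫ adj.counit.app B = adj.counit.app A ≫ u from adj.counit.naturality u)
    dsimp only [Triangle.mk] at hφ₁ hφ₂
    replace hφ₂ : (δ • (L.map w' ≫ l.hom.app (R.obj A))) ≫
        (shiftFunctor D (1 : ℤ)).map (adj.counit.app A) = φ ≫ w := hφ₂
    -- reduced forms of the zero-composition lemmas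
    have hz12 : R.map u ≫ v' = 0 := comp_distTriang_mor_zero₁₂ _ hT'
    have hz31 : w ≫ (shiftFunctor D (1 : ℤ)).map u = 0 := comp_distTriang_mor_zero₃₁ _ hT
    -- the map `β` associated to an object `Y : D` is the adjoint transpose
    have hβ : ∀ (Y : D) (X : C) (f : X ⟶ (shiftFunctor C (1 : ℤ)).obj (R.obj Y)),
        L.map f ≫ l.hom.app (R.obj Y) ≫ (shiftFunctor D (1 : ℤ)).map (adj.counit.app Y) =
          (adj.homEquiv _ _).symm (f ≫ r'.inv.app Y) := by
      intro Y X f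
      rw [Adjunction.homEquiv_counit, L.map_comp, assoc]
      congr 1
      rw [← hr₂ Y, ← L.map_comp_assoc, Iso.inv_hom_id_app]
      simp
    have hβinj : ∀ (Y : D) (X : C) (f : X ⟶ (shiftFunctor C (1 : ℤ)).obj (R.obj Y)),
        L.map f ≫ l.hom.app (R.obj Y) ≫ (shiftFunctor D (1 : ℤ)).map (adj.counit.app Y) = 0 →
          f = 0 := by
      intro Y X f hf
      rw [hβ] at hf
      have h0 : (adj.homEquiv X ((shiftFunctor D (1 : ℤ)).obj Y)).symm
          ((0 : X ⟶ (shiftFunctor D (1 : ℤ) ⋙ R).obj Y)) = 0 := by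
        rw [Adjunction.homEquiv_counit, L.map_zero, zero_comp]
      rw [← h0] at hf
      have hf' := (adj.homEquiv _ _).symm.injective hf
      rw [← cancel_mono (r'.inv.app Y)]
      simpa using hf'
    -- the adjoint of `φ`
    set ψ : Z ⟶ R.obj C₀ := adj.homEquiv _ _ φ with hψ
    have hψ' : ∀ (X : C) (f : X ⟶ Z),
        (adj.homEquiv X C₀).symm (f ≫ ψ) = L.map f ≫ φ := by
      intro X f
      rw [hψ, Adjunction.homEquiv_naturality_left_symm, Equiv.symm_apply_apply]
    -- ψ is an isomorphism, via the five lemma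
    have hbij : ∀ X : C, Function.Bijective (fun f : X ⟶ Z => L.map f ≫ φ) := by
      intro X
      constructor
      · -- injectivity
        intro f g hfg
        have hfg' : L.map f ≫ φ = L.map g ≫ φ := hfg
        have hd : L.map (f - g) ≫ φ = 0 := by
          rw [L.map_sub, Preadditive.sub_comp, hfg', sub_self]
        set d := f - g with hdd
        -- step 1 : d ≫ w' = 0
        have h1 : d ≫ w' = 0 := by
          apply hβinj A
          have e1 : L.map (d ≫ w') ≫ l.hom.app (R.obj A) ≫
              (shiftFunctor D (1 : ℤ)).map (adj.counit.app A) =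
                δ • (L.map d ≫ φ ≫ w) := by
            rw [← hφ₂, Preadditive.zsmul_comp, Preadditive.comp_zsmul, hδδD,
              L.map_comp]
            simp only [assoc]
          rw [e1, reassoc_of% hd, zero_comp, smul_zero]
        -- step 2 : d factors through v'
        obtain ⟨g₂, hg₂⟩ : ∃ g₂ : X ⟶ R.obj B, d = g₂ ≫ v' :=
          Triangle.coyoneda_exact₃ _ hT' d h1
        -- step 3 : (L g₂ ≫ ε_B) ≫ v = 0
        have h3 : (L.map g₂ ≫ adj.counit.app B) ≫ v = 0 := by
          have e3 : L.map d ≫ φ = L.map g₂ ≫ L.map v' ≫ φ := by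
            rw [hg₂, L.map_comp, assoc]
          rw [e3, hφ₁] at hd
          simpa only [assoc] using hd
        -- step 4 : factor through u
        obtain ⟨h, hh⟩ : ∃ h : L.obj X ⟶ A, L.map g₂ ≫ adj.counit.app B = h ≫ u :=
          Triangle.coyoneda_exact₂ _ hT _ h3
        -- step 5 : g₂ factors through R u
        have h5 : g₂ = (adj.homEquiv _ _ h) ≫ R.map u := by
          apply (adj.homEquiv _ _).symm.injective
          rw [Adjunction.homEquiv_naturality_right_symm, Equiv.symm_apply_apply,
            Adjunction.homEquiv_counit]
          exact hh
        -- conclude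
        have hd0 : d = 0 := by
          rw [hg₂, h5, assoc, hz12, comp_zero]
        rw [hdd, sub_eq_zero] at hd0
        exact hd0
      · -- surjectivity
        intro y
        -- pull back `δ • (y ≫ w)` along β_A
        set x₄ : X ⟶ (shiftFunctor C (1 : ℤ)).obj (R.obj A) :=
          adj.homEquiv _ _ (δ • (y ≫ w)) ≫ r'.hom.app A with hx₄
        have hβx₄ : L.map x₄ ≫ l.hom.app (R.obj A) ≫
            (shiftFunctor D (1 : ℤ)).map (adj.counit.app A) = δ • (y ≫ w) := by
          rw [hβ, hx₄]
          simp only [assoc, Iso.hom_inv_id_app]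
          simp
        -- x₄ is killed by (R u)⟦1⟧
        have h2 : x₄ ≫ (shiftFunctor C (1 : ℤ)).map (R.map u) = 0 := by
          apply hβinj B
          have hnat : L.map ((shiftFunctor C (1 : ℤ)).map (R.map u)) ≫ l.hom.app (R.obj B) =
              l.hom.app (R.obj A) ≫ (shiftFunctor D (1 : ℤ)).map (L.map (R.map u)) :=
            l.hom.naturality (R.map u)
          have hcu : L.map (R.map u) ≫ adj.counit.app B = adj.counit.app A ≫ u :=
            adj.counit.naturality u
          rw [L.map_comp, assoc, reassoc_of% hnat, ← (shiftFunctor D (1 : ℤ)).map_comp,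
            hcu, (shiftFunctor D (1 : ℤ)).map_comp, reassoc_of% hβx₄,
            Preadditive.zsmul_comp, assoc, hz31]
          simp
        -- factor x₄ through w'
        obtain ⟨x₃, hx₃⟩ : ∃ x₃ : X ⟶ Z, x₄ = x₃ ≫ w' :=
          Triangle.coyoneda_exact₁ _ hT' x₄ h2
        -- (y - L x₃ ≫ φ) is killed by w
        have h4 : (y - L.map x₃ ≫ φ) ≫ w = 0 := by
          have e4 : (L.map x₃ ≫ φ) ≫ w = y ≫ w := by
            rw [assoc, ← hφ₂, Preadditive.zsmul_comp, Preadditive.comp_zsmul]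
            have e5 : L.map x₃ ≫ (L.map w' ≫ l.hom.app (R.obj A)) ≫
                (shiftFunctor D (1 : ℤ)).map (adj.counit.app A) = δ • (y ≫ w) := by
              rw [← hβx₄, hx₃, L.map_comp]
              simp only [assoc]
            rw [e5, hδδD]
          rw [Preadditive.sub_comp, e4, sub_self]
        obtain ⟨y₂, hy₂⟩ : ∃ y₂ : L.obj X ⟶ B, y - L.map x₃ ≫ φ = y₂ ≫ v :=
          Triangle.coyoneda_exact₃ _ hT _ h4
        -- the preimage
        refine ⟨x₃ + (adj.homEquiv _ _ y₂) ≫ v', ?_⟩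
        have hy₂' : L.map ((adj.homEquiv X B) y₂ ≫ v') ≫ φ = y₂ ≫ v := by
          rw [L.map_comp, assoc, hφ₁, ← assoc]
          congr 1
          rw [← Adjunction.homEquiv_counit, Equiv.symm_apply_apply]
        show L.map (x₃ + (adj.homEquiv X B) y₂ ≫ v') ≫ φ = y
        rw [L.map_add, Preadditive.add_comp, hy₂', ← hy₂]
        abel
    have hψbij : ∀ X : C, Function.Bijective (fun f : X ⟶ Z => f ≫ ψ) := by
      intro X
      have e6 : (fun f : X ⟶ Z => f ≫ ψ) =
          (adj.homEquiv X C₀) ∘ (fun f : X ⟶ Z => L.map f ≫ φ) := by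
        funext f
        dsimp only [Function.comp]
        apply (adj.homEquiv X C₀).symm.injective
        rw [Equiv.symm_apply_apply, hψ']
      rw [e6]
      exact (adj.homEquiv X C₀).bijective.comp (hbij X)
    have hψiso : IsIso ψ := isIso_of_yoneda_map_bijective ψ hψbij
    -- the isomorphism of triangles
    refine Pretriangulated.isomorphic_distinguished _ hT' _ ?_
    refine Triangle.isoMk _ _ (Iso.refl _) (Iso.refl _) (asIso ψ).symm ?_ ?_ ?_
    · dsimp; change R.map u ≫ 𝟙 (R.obj B) = 𝟙 (R.obj A) ≫ R.map u; rw [id_comp, comp_id]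
    · dsimp
      change R.map v ≫ inv ψ = 𝟙 (R.obj B) ≫ v'
      rw [id_comp, IsIso.comp_inv_eq]
      -- goal : R.map v = v' ≫ ψ
      apply (adj.homEquiv _ _).symm.injective
      rw [hψ', Adjunction.homEquiv_counit]
      have hcv : L.map (R.map v) ≫ adj.counit.app C₀ = adj.counit.app B ≫ v :=
        adj.counit.naturality v
      rw [hcv]
      exact hφ₁.symm
    · dsimp
      change (δ • (R.map w ≫ r'.hom.app A : R.obj C₀ ⟶ (shiftFunctor C (1 : ℤ)).obj (R.obj A))) ≫ (shiftFunctor C (1 : ℤ)).map (𝟙 (R.obj A)) = inv ψ ≫ w'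
      rw [CategoryTheory.Functor.map_id, comp_id, IsIso.eq_inv_comp]
      -- goal : ψ ≫ δ • (R.map w ≫ r'.hom.app A) = w'
      have hφw : φ ≫ w = δ • ((L.map w' ≫ l.hom.app (R.obj A)) ≫
          (shiftFunctor D (1 : ℤ)).map (adj.counit.app A)) := by
        rw [← hφ₂, Preadditive.zsmul_comp]
      have step : ψ ≫ R.map w ≫ r'.hom.app A =
          δ • (w' ≫ (shiftFunctor C (1 : ℤ)).map (adj.unit.app (R.obj A)) ≫
            (shiftFunctor C (1 : ℤ)).map (R.map (adj.counit.app A))) := by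
        rw [hψ, Adjunction.homEquiv_unit]
        rw [assoc, ← R.map_comp_assoc, hφw]
        rw [R.map_zsmul, Preadditive.zsmul_comp, Preadditive.comp_zsmul]
        congr 1
        rw [R.map_comp, R.map_comp]
        simp only [assoc]
        -- naturality of r' at ε_A
        have hrnat : R.map ((shiftFunctor D (1 : ℤ)).map (adj.counit.app A)) ≫
            r'.hom.app A = r'.hom.app (L.obj (R.obj A)) ≫
              (shiftFunctor C (1 : ℤ)).map (R.map (adj.counit.app A)) :=
          r'.hom.naturality (adj.counit.app A)
        rw [hrnat]
        -- naturality of the unit at w'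
        have hunat : adj.unit.app Z ≫ R.map (L.map w') =
            w' ≫ adj.unit.app ((shiftFunctor C (1 : ℤ)).obj (R.obj A)) :=
          (adj.unit.naturality w').symm
        rw [← assoc, ← assoc, ← assoc, hunat]
        simp only [assoc]
        congr 1
        rw [← assoc, ← assoc, ← hr₁ (R.obj A)]
        simp only [assoc]
      rw [Preadditive.comp_zsmul, step, hδδC, ← (shiftFunctor C (1 : ℤ)).map_comp,
        adj.right_triangle_components, CategoryTheory.Functor.map_id, comp_id]
end

section
/- Let F : C₁ ⥤ C₂ and G : C₂ ⥤ C₃ be strong monoidal functors between symmetric monoidal closed categories, let H : C₁ ⥤ C₃ be a strong monoidal functor, and let ea : G ∘ F ≅ H be a monoidal natural isomorphism, i.e. for all A, B in C₁ one has ea_{A⊗B} ∘ G(μ^F_{A,B}) ∘ μ^G_{FA,FB} = μ^H_{A,B} ∘ (ea_A ⊗ ea_B). Then for all objects A, B of C₁ the following diagram commutes: the composite (G∘F)[A,B] --G(fh^F_{A,B})--> G[F A, F B] --fh^G_{FA,FB}--> [G F A, G F B] --[1, ea_B]--> [G F A, H B] equals the composite (G∘F)[A,B] --ea_{[A,B]}-->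 H[A,B] --fh^H_{A,B}--> [H A, H B] --[ea_A, 1]--> [G F A, H B]. -/
open CategoryTheory MonoidalCategory MonoidalClosed Functor.LaxMonoidal

section Defs

variable {C : Type*} [Category C] [MonoidalCategory C] [SymmetricCategory C] [MonoidalClosed C]

/-- The left evaluation `ev^l_{A,K} : [A,K] ⊗ A ⟶ K`. -/
noncomputable def evl (A K : C) : (ihom A).obj K ⊗ A ⟶ K :=
  (β_ ((ihom A).obj K) A).hom ≫ (ihom.ev A).app K

/-- The left coevaluation `coev^l_{A,K} : K ⟶ [A, K ⊗ A]`. -/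
noncomputable def coevl (A K : C) : K ⟶ (ihom A).obj (K ⊗ A) :=
  (ihom.coev A).app K ≫ (ihom A).map (β_ A K).hom

variable {D : Type*} [Category D] [MonoidalCategory D] [SymmetricCategory D] [MonoidalClosed D]

/-- The canonical morphism `fh_{A,B} : F[A,B] ⟶ [F A, F B]` for a strong monoidal functor
`F`, given by the composite
`F[A,B] ⟶ [F A, F[A,B] ⊗ F A] ⟶ [F A, F([A,B] ⊗ A)] ⟶ [F A, F B]`. -/
noncomputable def fh (F : C ⥤ D) [F.Monoidal] (A B : C) :
    F.obj ((ihom A).obj B) ⟶ (ihom (F.obj A)).obj (F.obj B) :=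
  coevl (F.obj A) (F.obj ((ihom A).obj B)) ≫
    (ihom (F.obj A)).map (μ F ((ihom A).obj B) A) ≫
    (ihom (F.obj A)).map (F.map (evl A B))

end Defs


section Aux

variable {C : Type*} [Category C] [MonoidalCategory C] [SymmetricCategory C] [MonoidalClosed C]
variable {D : Type*} [Category D] [MonoidalCategory D] [SymmetricCategory D] [MonoidalClosed D]

lemma fh_eq_curry (F : C ⥤ D) [F.Monoidal] (A B : C) :
    fh F A B = MonoidalClosed.curry
      ((β_ (F.obj A) (F.obj ((ihom A).obj B))).hom ≫ μ F ((ihom A).obj B) A ≫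
        F.map (evl A B)) := by
  simp [fh, coevl, MonoidalClosed.curry_eq, ← Functor.map_comp]

lemma fh_evl (F : C ⥤ D) [F.Monoidal] (A B : C) :
    fh F A B ▷ F.obj A ≫ evl (F.obj A) (F.obj B) =
      μ F ((ihom A).obj B) A ≫ F.map (evl A B) := by
  rw [show evl (F.obj A) (F.obj B) =
      (β_ ((ihom (F.obj A)).obj (F.obj B)) (F.obj A)).hom ≫ (ihom.ev (F.obj A)).app (F.obj B)
      from rfl, fh_eq_curry,
    BraidedCategory.braiding_naturality_left_assoc, ← MonoidalClosed.uncurry_eq,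
    MonoidalClosed.uncurry_curry, SymmetricCategory.symmetry_assoc]

end Aux

/-- **Compatibility of `fh` with composition (cf. Theorem `compof^*_theo`).**
Given strong monoidal functors `F : C₁ ⥤ C₂`, `G : C₂ ⥤ C₃`, `H : C₁ ⥤ C₃` and a monoidal
natural isomorphism `ea : G ∘ F ≅ H`, the diagram
`[1, ea_B] ∘ fh^G_{FA,FB} ∘ G(fh^F_{A,B}) = [ea_A, 1] ∘ fh^H_{A,B} ∘ ea_{[A,B]}` commutes. -/
theorem stmt9 {C₁ : Type*} [Category C₁] [MonoidalCategory C₁] [SymmetricCategory C₁]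
    [MonoidalClosed C₁]
    {C₂ : Type*} [Category C₂] [MonoidalCategory C₂] [SymmetricCategory C₂]
    [MonoidalClosed C₂]
    {C₃ : Type*} [Category C₃] [MonoidalCategory C₃] [SymmetricCategory C₃]
    [MonoidalClosed C₃]
    (F : C₁ ⥤ C₂) [F.Monoidal] (G : C₂ ⥤ C₃) [G.Monoidal] (H : C₁ ⥤ C₃) [H.Monoidal]
    (ea : F ⋙ G ≅ H)
    (hea : ∀ A B : C₁,
      μ G (F.obj A) (F.obj B) ≫ G.map (μ F A B) ≫ ea.hom.app (A ⊗ B) =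
        (ea.hom.app A ⊗ₘ ea.hom.app B) ≫ μ H A B)
    (A B : C₁) :
    G.map (fh F A B) ≫ fh G (F.obj A) (F.obj B) ≫
        (ihom (G.obj (F.obj A))).map (ea.hom.app B) =
      ea.hom.app ((ihom A).obj B) ≫ fh H A B ≫
        (MonoidalClosed.pre (ea.hom.app A)).app (H.obj B) := by
  apply MonoidalClosed.uncurry_injective
  rw [fh_eq_curry G, fh_eq_curry H, ← MonoidalClosed.curry_natural_right,
    ← MonoidalClosed.curry_natural_left, MonoidalClosed.uncurry_curry]
  rw [MonoidalClosed.uncurry_natural_left, MonoidalClosed.uncurry_eq,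
    MonoidalCategory.whiskerLeft_comp]
  simp only [Category.assoc]
  rw [MonoidalClosed.id_tensor_pre_app_comp_ev, whisker_exchange_assoc,
    ← MonoidalClosed.uncurry_eq, MonoidalClosed.uncurry_curry]
  rw [BraidedCategory.braiding_naturality_right_assoc, μ_natural_left_assoc]
  slice_lhs 3 4 => rw [← G.map_comp, fh_evl, G.map_comp]
  have hnat := ea.hom.naturality (evl A B)
  simp only [Functor.comp_obj, Functor.comp_map] at hnat
  slice_lhs 4 5 => rw [hnat]
  slice_lhs 2 4 => rw [hea]
  rw [← tensorHom_def'_assoc]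
  simp only [Category.assoc]
  rw [← BraidedCategory.braiding_naturality_assoc]
end
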